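/- Let T, V ∈ L(H). Then sp(h₀) is nonempty for every h₀ ∈ H if and only if T(ker V) is a nonnegative subspace of H and H = ker V + [T^#T(ker V)]^{[⊥]} (i.e., T^#T is ker V-complementable). -/

import Mathlib

open ContinuousLinearMap

noncomputable section

variable {H : Type*} [NormedAddCommGroup H] [InnerProductSpace ℂ H] [CompleteSpace H]

/-- The Krein adjoint `S^# = J ∘ S* ∘ J` of `S ∈ L(H)` on a Krein space with signature
operator `J`. -/
def kadj (J S : H →L[ℂ] H) : H →L[ℂ] H :=
  J ∘L (ContinuousLinearMap.adjoint S) ∘L J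

lemma quad_aux {a b : ℝ} (hb : 0 ≤ b) (h : ∀ t : ℝ, 0 ≤ 2*t*a + t^2*b) : a = 0 := by
  by_contra ha
  have hc : (0:ℝ) < b + 1 := by linarith
  have h1 := h (-(a/(b+1)))
  have key : 2*(-(a/(b+1)))*a + (-(a/(b+1)))^2*b = (a^2/(b+1)^2) * (-(b+2)) := by
    field_simp; ring
  rw [key] at h1
  have h2 : 0 < a^2/(b+1)^2 := by positivity
  nlinarith

lemma inner_J_swap (J : H →L[ℂ] H) (hJsa : IsSelfAdjoint J) (x y : H) :
    (inner ℂ (J x) y : ℂ) = inner ℂ x (J y) := by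
  rw [← hJsa.adjoint_eq, ContinuousLinearMap.adjoint_inner_left, hJsa.adjoint_eq]

lemma inner_J_re_symm (J : H →L[ℂ] H) (hJsa : IsSelfAdjoint J) (x y : H) :
    (inner ℂ (J x) y : ℂ).re = (inner ℂ (J y) x : ℂ).re := by
  rw [inner_J_swap J hJsa x y, ← inner_conj_symm x (J y), Complex.conj_re]

lemma q_expand (J T : H →L[ℂ] H) (hJsa : IsSelfAdjoint J) (u v : H) :
    (inner ℂ (J (T (u+v))) (T (u+v)) : ℂ).re
      = (inner ℂ (J (T u)) (T u) : ℂ).re + 2 * (inner ℂ (J (T v)) (T u) : ℂ).re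
        + (inner ℂ (J (T v)) (T v) : ℂ).re := by
  rw [map_add, map_add, inner_add_left, inner_add_right, inner_add_right]
  have := inner_J_re_symm J hJsa (T u) (T v)
  simp only [Complex.add_re]
  linarith

lemma q_smul_real (J T : H →L[ℂ] H) (t : ℝ) (z : H) :
    (inner ℂ (J (T ((t:ℂ) • z))) (T ((t:ℂ) • z)) : ℂ).re
      = t^2 * (inner ℂ (J (T z)) (T z) : ℂ).re := by
  rw [map_smul, map_smul, inner_smul_left, inner_smul_right, Complex.conj_ofReal,
    ← mul_assoc, ← Complex.ofReal_mul, Complex.re_ofReal_mul]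
  ring

lemma inner_smul_real (J T : H →L[ℂ] H) (t : ℝ) (m u : H) :
    (inner ℂ (J (T ((t:ℂ) • m))) (T u) : ℂ).re = t * (inner ℂ (J (T m)) (T u) : ℂ).re := by
  rw [map_smul, map_smul, inner_smul_left, Complex.conj_ofReal, Complex.re_ofReal_mul]

lemma orth_eq (J T : H →L[ℂ] H) (hJsa : IsSelfAdjoint J) (hJ2 : J ∘L J = 1) (w m : H) :
    (inner ℂ (J w) ((kadj J T ∘L T) m) : ℂ)
      = (starRingEnd ℂ) (inner ℂ (J (T m)) (T w)) := by
  have hJJ : ∀ x : H, J (J x) = x := fun x => by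
    have := congrFun (congrArg DFunLike.coe hJ2) x
    simpa using this
  have : ((kadj J T ∘L T) m : H) = J ((ContinuousLinearMap.adjoint T) (J (T m))) := rfl
  rw [this, inner_J_swap J hJsa, hJJ, ContinuousLinearMap.adjoint_inner_right,
    ← inner_conj_symm]

/-- `sp(h)`: the set of solutions of the indefinite spline problem with data `h`, i.e.
those `u ∈ h + ker V` with `[Tu,Tu] ≤ [T(h+z),T(h+z)]` for every `z ∈ ker V`. -/
def spSet (J T V : H →L[ℂ] H) (h : H) : Set H :=
  {u | (∃ z : H, V z = 0 ∧ u = h + z) ∧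
    ∀ z : H, V z = 0 →
      (inner ℂ (J (T u)) (T u) : ℂ).re ≤ (inner ℂ (J (T (h + z))) (T (h + z)) : ℂ).re}

/-- `sp(h₀)` is nonempty for every `h₀ ∈ H` iff `T(ker V)` is a nonnegative
subspace of `H` and `H = ker V + [T^#T(ker V)]^{[⊥]}` (`T^#T` is `ker V`-complementable). -/
theorem stmt13
    [TopologicalSpace.SeparableSpace H]
    (J : H →L[ℂ] H) (hJsa : IsSelfAdjoint J) (hJ2 : J ∘L J = 1)
    (T V : H →L[ℂ] H) :
    (∀ h₀ : H, (spSet J T V h₀).Nonempty) ↔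
      ((∀ z : H, V z = 0 → 0 ≤ (inner ℂ (J (T z)) (T z) : ℂ).re) ∧
        ∀ x : H, ∃ z w : H, V z = 0 ∧
          (∀ m : H, V m = 0 → (inner ℂ (J w) ((kadj J T ∘L T) m) : ℂ) = 0) ∧
          x = z + w) := by
  constructor
  · intro hsp
    -- nonnegativity
    have hnn : ∀ z : H, V z = 0 → 0 ≤ (inner ℂ (J (T z)) (T z) : ℂ).re := by
      intro z hz
      by_contra hneg
      push_neg at hneg
      obtain ⟨u, ⟨z₀, hz₀, hu⟩, hmin⟩ := hsp 0
      set qu := (inner ℂ (J (T u)) (T u) : ℂ).re with hqu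
      set qz := (inner ℂ (J (T z)) (T z) : ℂ).re with hqz
      set t : ℝ := Real.sqrt (max ((qu - 1)/qz) 0) with ht
      have htz : V ((t:ℂ) • z) = 0 := by rw [map_smul, hz, smul_zero]
      have key := hmin ((t:ℂ) • z) htz
      rw [zero_add, q_smul_real] at key
      have ht2 : t^2 = max ((qu - 1)/qz) 0 := Real.sq_sqrt (le_max_right _ _)
      have hle : (qu - 1)/qz ≤ t^2 := ht2 ▸ le_max_left _ _
      have hzne : qz ≠ 0 := ne_of_lt hneg
      have : t^2 * qz ≤ ((qu - 1)/qz) * qz :=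
        mul_le_mul_of_nonpos_right hle (le_of_lt hneg)
      rw [div_mul_cancel₀ _ hzne] at this
      linarith
    refine ⟨hnn, ?_⟩
    intro x
    obtain ⟨u, ⟨z, hz, hu⟩, hmin⟩ := hsp x
    have hre : ∀ m : H, V m = 0 → (inner ℂ (J (T m)) (T u) : ℂ).re = 0 := by
      intro m hm
      apply quad_aux (hnn m hm)
      intro t
      have hzm : V (z + (t:ℂ) • m) = 0 := by
        rw [map_add, map_smul, hz, hm, smul_zero, add_zero]
      have key := hmin (z + (t:ℂ) • m) hzm
      have hx : x + (z + (t:ℂ) • m) = u + (t:ℂ) • m := by rw [hu]; abel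
      rw [hx, q_expand J T hJsa, q_smul_real, inner_smul_real] at key
      linarith
    refine ⟨-z, u, by rw [map_neg, hz, neg_zero], ?_, by rw [hu]; abel⟩
    intro m hm
    rw [orth_eq J T hJsa hJ2]
    have hc : (inner ℂ (J (T m)) (T u) : ℂ) = 0 := by
      apply Complex.ext
      · exact hre m hm
      · have him : V (Complex.I • m) = 0 := by rw [map_smul, hm, smul_zero]
        have := hre (Complex.I • m) him
        rw [map_smul, map_smul, inner_smul_left] at this
        simpa [Complex.ext_iff] using this
    rw [hc, map_zero]
  · rintro ⟨hnn, hcomp⟩ h₀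
    obtain ⟨z, w, hz, hw, hx⟩ := hcomp h₀
    refine ⟨w, ⟨⟨-z, by rw [map_neg, hz, neg_zero], by rw [hx]; abel⟩, ?_⟩⟩
    intro m hm
    have hzm : V (z + m) = 0 := by rw [map_add, hz, hm, add_zero]
    have h1 : h₀ + m = w + (z + m) := by rw [hx]; abel
    rw [h1, q_expand J T hJsa]
    have h2 : (inner ℂ (J (T (z + m))) (T w) : ℂ) = 0 := by
      have := hw (z + m) hzm
      rw [orth_eq J T hJsa hJ2] at this
      exact (starRingEnd ℂ).injective (by simpa using this)
    have h3 : (inner ℂ (J (T (z + m))) (T w) : ℂ).re = 0 := by rw [h2]; rfl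
    have h4 := hnn (z + m) hzm
    linarith
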